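/- Let h : ℝ → ℝ be continuous and strictly positive on [δ,∞), with ∫_δ^∞ 1/h(s) ds < ∞. Let Φ : [t̄,T) → [δ,∞) be differentiable with Φ'(t) ≥ h(Φ(t)) on (t̄,T) and Φ(t̄) = δ. Then T ≤ t̄ + ∫_δ^∞ 1/h(s) ds; i.e., Φ cannot exist on any interval [t̄, t̄ + I + ε) with I = ∫_δ^∞ ds/h(s). -/

import Mathlib

open Set MeasureTheory

theorem blowup_time_upper_bound
    (δ tb T : ℝ) (hδ : 0 < δ) (htbT : tb < T)
    (h : ℝ → ℝ)
    (hcont : ContinuousOn h (Ici δ))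
    (hpos : ∀ s ∈ Ici δ, 0 < h s)
    (hint : IntegrableOn (fun s => 1 / h s) (Ioi δ))
    (Φ Φ' : ℝ → ℝ)
    (hrange : ∀ t ∈ Ico tb T, Φ t ∈ Ici δ)
    (hderiv : ∀ t ∈ Ioo tb T, HasDerivAt Φ (Φ' t) t)
    (hineq : ∀ t ∈ Ioo tb T, h (Φ t) ≤ Φ' t)
    (hstart : Φ tb = δ) :
    T ≤ tb + ∫ s in Ioi δ, 1 / h s := by
  set g : ℝ → ℝ := fun s => 1 / h s with hgdef
  set I : ℝ := ∫ s in Ioi δ, 1 / h s with hIdef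
  have hgcontOn : ContinuousOn g (Ioi δ) :=
    ContinuousOn.div continuousOn_const (hcont.mono Ioi_subset_Ici_self)
      (fun s hs => (hpos s (Ioi_subset_Ici_self hs)).ne')
  have hopen : IsOpen (Ioi δ) := isOpen_Ioi
  -- positivity of derivatives
  have hΦ'pos : ∀ t ∈ Ioo tb T, 0 < Φ' t := fun t ht =>
    lt_of_lt_of_le (hpos _ (hrange t (Ioo_subset_Ico_self ht))) (hineq t ht)
  -- Φ strictly increasing on the open interval
  have hΦmono : StrictMonoOn Φ (Ioo tb T) := by
    apply strictMonoOn_of_deriv_pos (convex_Ioo tb T)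
    · exact fun t ht => (hderiv t ht).continuousAt.continuousWithinAt
    · intro t ht
      rw [interior_Ioo] at ht
      rw [(hderiv t ht).deriv]
      exact hΦ'pos t ht
  have hΦgt : ∀ t ∈ Ioo tb T, δ < Φ t := by
    intro t ht
    have hmid : (tb + t) / 2 ∈ Ioo tb T :=
      ⟨by linarith [ht.1], by linarith [ht.1, ht.2]⟩
    have := hΦmono hmid ht (by linarith [ht.1])
    have h2 : δ ≤ Φ ((tb + t) / 2) := hrange _ (Ioo_subset_Ico_self hmid)
    linarith
  -- FTC derivative of G
  have hIG : ∀ y ∈ Ioi δ, HasDerivAt (fun u => ∫ s in δ..u, g s) (g y) y := by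
    intro y hy
    have hii : IntervalIntegrable g volume δ y := by
      rw [intervalIntegrable_iff_integrableOn_Ioc_of_le (le_of_lt hy)]
      exact hint.mono_set Ioc_subset_Ioi_self
    exact intervalIntegral.integral_hasDerivAt_right hii
      (hgcontOn.stronglyMeasurableAtFilter hopen y hy)
      (hgcontOn.continuousAt (hopen.mem_nhds hy))
  -- F and its derivative
  set F : ℝ → ℝ := fun t => (∫ s in δ..Φ t, g s) - (t - tb) with hFdef
  have hF : ∀ t ∈ Ioo tb T, HasDerivAt F (g (Φ t) * Φ' t - 1) t := by
    intro t ht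
    have h1 : HasDerivAt (fun u => ∫ s in δ..Φ u, g s) (g (Φ t) * Φ' t) t :=
      (hIG (Φ t) (hΦgt t ht)).comp t (hderiv t ht)
    exact h1.sub ((hasDerivAt_id t).sub_const tb)
  have hFderiv_nonneg : ∀ t ∈ Ioo tb T, 0 ≤ g (Φ t) * Φ' t - 1 := by
    intro t ht
    have hh : 0 < h (Φ t) := hpos _ (hrange t (Ioo_subset_Ico_self ht))
    have : (1 : ℝ) ≤ Φ' t / h (Φ t) := (one_le_div hh).mpr (hineq t ht)
    have heq : g (Φ t) * Φ' t = Φ' t / h (Φ t) := by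
      simp [hgdef, div_mul_eq_mul_div, one_mul, div_eq_mul_inv, mul_comm]
    linarith [heq ▸ this]
  have hFmono : MonotoneOn F (Ioo tb T) := by
    apply monotoneOn_of_deriv_nonneg (convex_Ioo tb T)
    · exact fun t ht => (hF t ht).continuousAt.continuousWithinAt
    · intro t ht
      rw [interior_Ioo] at ht
      exact (hF t ht).differentiableAt.differentiableWithinAt
    · intro t ht
      rw [interior_Ioo] at ht
      rw [(hF t ht).deriv]
      exact hFderiv_nonneg t ht
  -- g nonneg facts
  have hgnonneg : ∀ s ∈ Ici δ, 0 ≤ g s := fun s hs => le_of_lt (by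
    simp only [hgdef]
    exact div_pos one_pos (hpos s hs))
  have hGnonneg : ∀ t ∈ Ioo tb T, 0 ≤ ∫ s in δ..Φ t, g s := by
    intro t ht
    apply intervalIntegral.integral_nonneg (le_of_lt (hΦgt t ht))
    intro u hu
    exact hgnonneg u hu.1
  have hGleI : ∀ t ∈ Ioo tb T, (∫ s in δ..Φ t, g s) ≤ I := by
    intro t ht
    rw [intervalIntegral.integral_of_le (le_of_lt (hΦgt t ht))]
    apply setIntegral_mono_set hint
    · filter_upwards [ae_restrict_mem measurableSet_Ioi] with s hs
      exact hgnonneg s (Ioi_subset_Ici_self hs)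
    · exact (Ioc_subset_Ioi_self).eventuallyLE
  -- core inequality
  have hcore : ∀ t1 ∈ Ioo tb T, ∀ t2 ∈ Ioo tb T, t1 ≤ t2 → t2 - t1 ≤ I := by
    intro t1 ht1 t2 ht2 h12
    have := hFmono ht1 ht2 h12
    have h1 := hGnonneg t1 ht1
    have h2 := hGleI t2 ht2
    simp only [hFdef] at this
    linarith
  -- I is nonneg, indeed ≥ any t - tb
  have hstep : ∀ t ∈ Ioo tb T, t - tb ≤ I := by
    intro t ht
    apply le_of_forall_pos_le_add
    intro ε hε
    set t1 : ℝ := min (tb + ε) ((tb + t) / 2) with ht1def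
    have ht1 : t1 ∈ Ioo tb T := by
      constructor
      · apply lt_min (by linarith) (by linarith [ht.1])
      · exact lt_of_le_of_lt (min_le_right _ _) (by linarith [ht.1, ht.2])
    have ht1t : t1 ≤ t := le_trans (min_le_right _ _) (by linarith [ht.1])
    have := hcore t1 ht1 t ht ht1t
    have : t1 ≤ tb + ε := min_le_left _ _
    have h' := hcore t1 ht1 t ht ht1t
    linarith
  have hIpos : 0 < I := by
    have hmid : (tb + T) / 2 ∈ Ioo tb T := ⟨by linarith, by linarith⟩
    have := hstep _ hmid
    linarith [hmid.1]
  by_contra hcon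
  push_neg at hcon
  have hmid : (tb + I + T) / 2 ∈ Ioo tb T := ⟨by linarith, by linarith⟩
  have := hstep _ hmid
  linarith
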